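/- If the quiver Q has no oriented cycles, then every G_v-invariant polynomial function on Rep(Q, v) is constant. -/

import Mathlib

/-- If the quiver `Q` (vertex set `I`, edge set `E`, source/target maps `s, t`) has no
oriented cycles, then every `G_v`-invariant polynomial function on `Rep(Q, v)` is
constant. -/
theorem invariant_polynomials_constant_of_no_oriented_cycles
    {I E : Type} [Fintype I] [DecidableEq I] [Fintype E]
    (s t : E → I) (v : I → ℕ)
    (hacyclic : ¬ ∃ (k : ℕ) (e : Fin (k + 1) → E),
      (∀ m : Fin k, s (e m.succ) = t (e m.castSucc)) ∧ s (e 0) = t (e (Fin.last k)))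
    (f : (∀ e : E, Matrix (Fin (v (t e))) (Fin (v (s e))) ℂ) → ℂ)
    (hpoly : f ∈ Algebra.adjoin ℂ
      {c : (∀ e : E, Matrix (Fin (v (t e))) (Fin (v (s e))) ℂ) → ℂ |
        ∃ (e : E) (p : Fin (v (t e))) (q : Fin (v (s e))), c = fun x => x e p q})
    (hinv : ∀ (g : ∀ i : I, (Matrix (Fin (v i)) (Fin (v i)) ℂ)ˣ)
      (x : ∀ e : E, Matrix (Fin (v (t e))) (Fin (v (s e))) ℂ),
      f (fun e => (↑(g (t e)) : Matrix (Fin (v (t e))) (Fin (v (t e))) ℂ) * x e *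
        (↑((g (s e))⁻¹) : Matrix (Fin (v (s e))) (Fin (v (s e))) ℂ)) = f x) :
    ∃ c : ℂ, f = fun _ => c := by
  classical
  -- the edge relation on vertices
  set r : I → I → Prop := fun i j => ∃ e : E, s e = i ∧ t e = j with hr
  -- paths from transitive closure
  have hpath : ∀ i j, Relation.TransGen r i j → ∃ (k : ℕ) (e : Fin (k+1) → E),
      (∀ m : Fin k, s (e m.succ) = t (e m.castSucc)) ∧ s (e 0) = i ∧
        t (e (Fin.last k)) = j := by
    intro i j hij
    induction hij with
    | single hab =>
      obtain ⟨e0, hs0, ht0⟩ := hab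
      exact ⟨0, fun _ => e0, fun m => m.elim0, hs0, ht0⟩
    | tail hab hbc ih =>
      obtain ⟨k, e, h1, h2, h3⟩ := ih
      obtain ⟨e', hs', ht'⟩ := hbc
      refine ⟨k+1, Fin.snoc e e', ?_, ?_, ?_⟩
      · intro m
        refine Fin.lastCases ?_ ?_ m
        · have hsucc : (Fin.last k).succ = Fin.last (k+1) := rfl
          rw [hsucc, Fin.snoc_last, Fin.snoc_castSucc, hs', h3]
        · intro j
          have hsc : (j.castSucc).succ = (j.succ).castSucc := by
            exact Fin.succ_castSucc j
          rw [hsc, Fin.snoc_castSucc, Fin.snoc_castSucc]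
          exact h1 j
      · have h0 : (0 : Fin (k+2)) = Fin.castSucc 0 := by simp
        rw [h0, Fin.snoc_castSucc]
        exact h2
      · rw [Fin.snoc_last]
        exact ht'
  have hirr : ∀ i, ¬ Relation.TransGen r i i := by
    intro i hi
    obtain ⟨k, e, h1, h2, h3⟩ := hpath i i hi
    exact hacyclic ⟨k, e, h1, h2.trans h3.symm⟩
  -- height function
  set h : I → ℕ := fun i =>
    (Finset.univ.filter (fun j => Relation.TransGen r j i)).card with hh
  have hlt : ∀ e : E, h (s e) < h (t e) := by
    intro e
    apply Finset.card_lt_card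
    have hsub : Finset.univ.filter (fun j => Relation.TransGen r j (s e)) ⊆
        Finset.univ.filter (fun j => Relation.TransGen r j (t e)) := by
      intro j hj
      simp only [Finset.mem_filter, Finset.mem_univ, true_and] at hj ⊢
      exact hj.tail ⟨e, rfl, rfl⟩
    rw [Finset.ssubset_iff_of_subset hsub]
    refine ⟨s e, ?_, ?_⟩
    · simp only [Finset.mem_filter, Finset.mem_univ, true_and]
      exact Relation.TransGen.single ⟨e, rfl, rfl⟩
    · simp only [Finset.mem_filter, Finset.mem_univ, true_and]
      exact hirr (s e)
  -- main argument
  suffices hkey : ∀ x, f x = f 0 by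
    exact ⟨f 0, funext fun x => hkey x⟩
  intro x
  -- the one-parameter scaling is a polynomial in μ
  have hFpoly : ∃ p : Polynomial ℂ, ∀ μ : ℂ,
      f (fun e => μ ^ (h (t e) - h (s e)) • x e) = p.eval μ := by
    refine Algebra.adjoin_induction ?_ ?_ ?_ ?_ hpoly
    · rintro c ⟨e, p, q, rfl⟩
      refine ⟨Polynomial.C (x e p q) * Polynomial.X ^ (h (t e) - h (s e)), fun μ => ?_⟩
      simp only [Matrix.smul_apply, smul_eq_mul, Polynomial.eval_mul,
        Polynomial.eval_C, Polynomial.eval_pow, Polynomial.eval_X]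
      ring
    · intro c
      exact ⟨Polynomial.C c, fun μ => by simp [Pi.algebraMap_apply]⟩
    · rintro a b - - ⟨pa, hpa⟩ ⟨pb, hpb⟩
      exact ⟨pa + pb, fun μ => by simp [hpa μ, hpb μ]⟩
    · rintro a b - - ⟨pa, hpa⟩ ⟨pb, hpb⟩
      exact ⟨pa * pb, fun μ => by simp [hpa μ, hpb μ]⟩
  obtain ⟨p, hp⟩ := hFpoly
  -- on nonzero μ, the polynomial equals f x, by invariance
  have hconst : ∀ μ : ℂ, μ ≠ 0 → Polynomial.eval μ p = f x := by
    intro μ hμ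
    rw [← hp μ]
    have hg := hinv (fun i =>
      Units.map (algebraMap ℂ (Matrix (Fin (v i)) (Fin (v i)) ℂ)).toMonoidHom
        ((Units.mk0 μ hμ) ^ h i)) x
    rw [← hg]
    congr 1
    funext e
    have hcoe1 : (↑(Units.map (algebraMap ℂ (Matrix (Fin (v (t e)))
        (Fin (v (t e))) ℂ)).toMonoidHom ((Units.mk0 μ hμ) ^ h (t e))) :
        Matrix (Fin (v (t e))) (Fin (v (t e))) ℂ) =
        algebraMap ℂ _ (μ ^ h (t e)) := by
      simp
    have hcoe2 : (↑((Units.map (algebraMap ℂ (Matrix (Fin (v (s e)))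
        (Fin (v (s e))) ℂ)).toMonoidHom ((Units.mk0 μ hμ) ^ h (s e)))⁻¹) :
        Matrix (Fin (v (s e))) (Fin (v (s e))) ℂ) =
        algebraMap ℂ _ ((μ ^ h (s e))⁻¹) := by
      rw [← map_inv, Units.coe_map]
      simp
    rw [hcoe1, hcoe2, Algebra.algebraMap_eq_smul_one, Algebra.algebraMap_eq_smul_one,
      Matrix.smul_mul, Matrix.one_mul, Matrix.mul_smul, Matrix.mul_one, smul_smul]
    congr 1
    rw [pow_sub₀ μ hμ (le_of_lt (hlt e)), mul_comm]
  -- hence p is the constant polynomial f x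
  have hpC : p = Polynomial.C (f x) := by
    apply Polynomial.eq_of_infinite_eval_eq
    have hinf : ({μ : ℂ | μ ≠ 0}).Infinite := by
      have h0 : ({0}ᶜ : Set ℂ).Infinite := (Set.finite_singleton 0).infinite_compl
      convert h0 using 1
      ext; simp
    refine Set.Infinite.mono ?_ hinf
    intro μ hμ
    simp only [Set.mem_setOf_eq, Polynomial.eval_C]
    exact hconst μ hμ
  -- evaluate at 0
  have h0 := hp 0
  rw [hpC, Polynomial.eval_C] at h0
  rw [← h0]
  congr 1
  funext e
  rw [zero_pow (Nat.sub_ne_zero_of_lt (hlt e)), zero_smul]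
  rfl
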